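/- Let 𝒯 be a linear map on ℂ^{d×d} of the form 𝒯(A) = ∑_{m,n} 𝔭_{m,n} Π_m A Π_n with 𝔭 Hermitian and not positive semidefinite (Π_m the diagonal matrix units). Then there exist a unit vector ψ ∈ ℂ^d and a vector φ ∈ ℂ^d such that ⟨φ, 𝒯(|ψ⟩⟨ψ|) φ⟩ < 0. Concretely, if U diagonalizes 𝔭 with 𝔭 = U diag(𝔭_1,…,𝔭_d) U† and 𝔭_n < 0, one may take ψ with components ψ_m = U_{m,n}^* and φ = (1,1,…,1)^⊤. -/

import Mathlib

open Matrix BigOperators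
open scoped ComplexOrder

noncomputable section

abbrev Mat (d : ℕ) := Matrix (Fin d) (Fin d) ℂ

/-- The diagonal matrix unit Π_m with a 1 in entry (m,m). -/
def diagUnit {d : ℕ} (m : Fin d) : Mat d := Matrix.single m m 1

/-- if 𝒯(A) = ∑_{m,n} 𝔭_{m,n} Π_m A Π_n with 𝔭 Hermitian but not positive
semidefinite, then there exist a unit vector ψ and a vector φ with
⟨φ, 𝒯(|ψ⟩⟨ψ|) φ⟩ < 0 (a real, negative quadratic form value). -/
lemma dU_apply {d : ℕ} (m n i j : Fin d) (A : Mat d) :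
    (diagUnit m * A * diagUnit n) i j = if i = m ∧ j = n then A m n else 0 := by
  rcases eq_or_ne i m with h | h <;> rcases eq_or_ne j n with h2 | h2 <;>
    simp [diagUnit, h, h2, Matrix.single_mul_apply_same,
      Matrix.mul_single_apply_same, Matrix.single_mul_apply_of_ne,
      Matrix.mul_single_apply_of_ne]

lemma key_comp {d : ℕ} (p : Mat d) (ψ : Fin d → ℂ) :
    (star (fun _ : Fin d => (1:ℂ)) ⬝ᵥ
      (∑ m : Fin d, ∑ n : Fin d, p m n • (diagUnit m * (Matrix.vecMulVec ψ (star ψ)) * diagUnit n)).mulVec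
        (fun _ => 1))
      = star (star ψ) ⬝ᵥ p.mulVec (star ψ) := by
  simp only [dotProduct, mulVec, Matrix.sum_apply, Matrix.smul_apply, dU_apply,
    Matrix.vecMulVec_apply, Pi.star_apply, star_one, one_mul, mul_one, smul_eq_mul, star_star]
  simp only [mul_ite, mul_zero, ite_and, Finset.sum_ite_eq, Finset.mem_univ, if_true,
    Finset.mul_sum]
  exact Finset.sum_congr rfl fun x _ => Finset.sum_congr rfl fun y _ => by
    simp [Finset.sum_ite_eq, Finset.sum_ite_eq']; ring

theorem stmt1 {d : ℕ} (p : Mat d) (hp : p.IsHermitian) (hnp : ¬ p.PosSemidef)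
    (T : Mat d → Mat d)
    (hT : ∀ A, T A = ∑ m : Fin d, ∑ n : Fin d, p m n • (diagUnit m * A * diagUnit n)) :
    ∃ (ψ φ : Fin d → ℂ), star ψ ⬝ᵥ ψ = 1 ∧
      (star φ ⬝ᵥ (T (Matrix.vecMulVec ψ (star ψ))).mulVec φ).im = 0 ∧
      (star φ ⬝ᵥ (T (Matrix.vecMulVec ψ (star ψ))).mulVec φ).re < 0 := by
  obtain ⟨x, hx⟩ : ∃ x : Fin d → ℂ, ¬ 0 ≤ star x ⬝ᵥ p.mulVec x := by
    by_contra h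
    push_neg at h
    exact hnp (Matrix.posSemidef_iff_dotProduct_mulVec.mpr ⟨hp, h⟩)
  set z := star x ⬝ᵥ p.mulVec x with hz
  have hconj : star z = z := by
    calc star (star x ⬝ᵥ p *ᵥ x) = star (p *ᵥ x) ⬝ᵥ star (star x) := by
          rw [star_dotProduct_star]
      _ = (star x ᵥ* pᴴ) ⬝ᵥ x := by rw [star_mulVec, star_star]
      _ = star x ⬝ᵥ pᴴ *ᵥ x := (dotProduct_mulVec _ _ _).symm
      _ = star x ⬝ᵥ p *ᵥ x := by rw [hp.eq]
  have him : z.im = 0 := by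
    have := congrArg Complex.im hconj
    simp only [Complex.star_def, Complex.conj_im] at this
    clear hx
    linarith
  have hre : z.re < 0 := by
    by_contra h
    push_neg at h
    exact hx (Complex.le_def.mpr ⟨by simpa using h, by simp [him]⟩)
  have hx0 : x ≠ 0 := by
    rintro rfl
    simp [hz] at hre
  set r : ℝ := ∑ i, Complex.normSq (x i) with hr
  have hrpos : 0 < r := by
    obtain ⟨i, hi⟩ := Function.ne_iff.mp hx0
    exact Finset.sum_pos' (fun j _ => Complex.normSq_nonneg _)
      ⟨i, Finset.mem_univ i, Complex.normSq_pos.mpr (by simpa using hi)⟩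
  set c : ℝ := Real.sqrt r with hc
  have hcpos : 0 < c := Real.sqrt_pos.mpr hrpos
  set ψ : Fin d → ℂ := ((c:ℂ))⁻¹ • star x with hψ
  have hstarψ : star ψ = ((c:ℂ))⁻¹ • x := by
    rw [hψ, star_smul, star_star]
    congr 1
    simp [Complex.star_def, map_inv₀]
  have hVal : star (fun _ : Fin d => (1:ℂ)) ⬝ᵥ
      (T (Matrix.vecMulVec ψ (star ψ))).mulVec (fun _ => 1) = ((c⁻¹ * c⁻¹ : ℝ) : ℂ) * z := by
    rw [hT, key_comp, hstarψ]
    simp only [star_smul, smul_dotProduct, Matrix.mulVec_smul, dotProduct_smul, smul_eq_mul,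
      Complex.star_def, map_inv₀, Complex.conj_ofReal, ← hz]
    push_cast; ring
  refine ⟨ψ, fun _ => 1, ?_, ?_, ?_⟩
  · rw [hstarψ, hψ, smul_dotProduct, dotProduct_smul]
    have h1 : x ⬝ᵥ star x = (r : ℂ) := by
      simp [dotProduct, hr, Complex.mul_conj]
    have h2 : c * c = r := Real.mul_self_sqrt hrpos.le
    rw [h1, smul_eq_mul, smul_eq_mul]
    have h3 : ((c:ℂ))⁻¹ * (((c:ℂ))⁻¹ * (r:ℂ)) = ((c⁻¹ * c⁻¹ * r : ℝ) : ℂ) := by push_cast; ring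
    rw [h3]
    norm_cast
    rw [← h2]
    field_simp
  · rw [hVal, Complex.mul_im]
    simp [him]
  · rw [hVal, Complex.mul_re]
    simp only [Complex.ofReal_re, Complex.ofReal_im, him, mul_zero, zero_mul, sub_zero]
    exact mul_neg_of_pos_of_neg (by positivity) hre
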